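/- If two finite simple graphs G and H (with no isolated vertices) are EPWL-indistinguishable with respect to the normalized Laplacian L̂, then G and H are GD-WL-indistinguishable with respect to the shortest-path distance SPD. (GD-WL with shortest-path distance is upper bounded in expressive power by EPWL with L̂.) -/

import Mathlib

open scoped Classical
open Matrix BigOperators

noncomputable section

namespace EPWL

/-! ### Generic node-coloring refinement with pairwise features in a type `α` -/

/-- The common nested type of round-`l` colors: `C 0 = Unit`,
`C (l+1) = C l × Multiset (C l × α)`. -/
def Color (α : Type) : ℕ → Type
  | 0 => Unit
  | l + 1 => Color α l × Multiset (Color α l × α)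

/-- The color refinement: `χ⁰(u) = ()` and
`χ^{l+1}(u) = (χ^l(u), {{(χ^l(v), f u v) : v}})`. -/
def colorFn {V : Type*} [Fintype V] {α : Type} (f : V → V → α) :
    (l : ℕ) → V → Color α l
  | 0 => fun _ => ()
  | l + 1 => fun u =>
      (colorFn f l u, Finset.univ.val.map fun v => (colorFn f l v, f u v))

/-- Two graphs (presented through their pairwise-feature functions) are
indistinguishable by the node-coloring refinement: at every round, the
multisets of node colors agree. -/
def NodeIndist {V W : Type*} [Fintype V] [Fintype W] {α : Type}
    (f : V → V → α) (g : W → W → α) : Prop :=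
  ∀ l : ℕ, Finset.univ.val.map (colorFn f l) = Finset.univ.val.map (colorFn g l)

/-- Atomic type of an ordered vertex pair: `0` if equal, `1` if adjacent,
`2` otherwise. -/
def atp {V : Type*} (G : SimpleGraph V) (u v : V) : ℕ :=
  if u = v then 0 else if G.Adj u v then 1 else 2

/-- 1-WL indistinguishability. -/
def WL1Indist {V W : Type*} [Fintype V] [Fintype W]
    (G : SimpleGraph V) (H : SimpleGraph W) : Prop :=
  NodeIndist (atp G) (atp H)

/-! ### Graph matrices -/

/-- Real adjacency matrix. -/
def adjM {V : Type*} [Fintype V] (G : SimpleGraph V) : Matrix V V ℝ :=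
  G.adjMatrix ℝ

/-- Real (diagonal) degree matrix. -/
def degM {V : Type*} [Fintype V] (G : SimpleGraph V) : Matrix V V ℝ :=
  Matrix.diagonal fun v => (G.degree v : ℝ)

/-- Laplacian matrix `L = D - A`. -/
def lapM {V : Type*} [Fintype V] (G : SimpleGraph V) : Matrix V V ℝ :=
  degM G - adjM G

/-- The diagonal matrix `D^{-1/2}`. -/
def invSqrtDegM {V : Type*} [Fintype V] (G : SimpleGraph V) : Matrix V V ℝ :=
  Matrix.diagonal fun v => (Real.sqrt (G.degree v))⁻¹

/-- Normalized Laplacian `L̂ = D^{-1/2} L D^{-1/2}`. -/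
def normLapM {V : Type*} [Fintype V] (G : SimpleGraph V) : Matrix V V ℝ :=
  invSqrtDegM G * lapM G * invSqrtDegM G

/-- Normalized adjacency matrix `Â = D^{-1/2} A D^{-1/2}`. -/
def normAdjM {V : Type*} [Fintype V] (G : SimpleGraph V) : Matrix V V ℝ :=
  invSqrtDegM G * adjM G * invSqrtDegM G

/-- The diagonal matrix `D⁻¹` of inverse degrees. -/
def invDegM {V : Type*} [Fintype V] (G : SimpleGraph V) : Matrix V V ℝ :=
  Matrix.diagonal fun v => ((G.degree v : ℝ))⁻¹

/-- The random-walk matrix `D⁻¹ A`. -/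
def rwM {V : Type*} [Fintype V] (G : SimpleGraph V) : Matrix V V ℝ :=
  invDegM G * adjM G

/-- The all-ones matrix `J`. -/
def allOnes (V : Type*) : Matrix V V ℝ := Matrix.of fun _ _ => 1

/-- A choice among the three graph matrices `A`, `L`, `L̂`. -/
inductive MatChoice | adj | lap | normLap

/-- The graph matrix associated with a choice. -/
def matOf {V : Type*} [Fintype V] (c : MatChoice) (G : SimpleGraph V) :
    Matrix V V ℝ :=
  match c with
  | .adj => adjM G
  | .lap => lapM G
  | .normLap => normLapM G

/-! ### Spectral decompositions and the eigenspace projection invariant -/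

/-- `IsSpectralDecomp M Λ P` says: `Λ` is the (finite) set of distinct
eigenvalues of the symmetric matrix `M` and, for `lam ∈ Λ`, `P lam` is the
orthogonal projection onto the eigenspace of `lam`. This is characterized
uniquely by: the `P lam` are symmetric idempotent nonzero matrices,
pairwise "orthogonal" (`P lam * P mu = 0` for `lam ≠ mu`), summing to the
identity, with `∑ lam • P lam = M`. -/
structure IsSpectralDecomp {n : Type*} [Fintype n]
    (M : Matrix n n ℝ) (Λ : Finset ℝ) (P : ℝ → Matrix n n ℝ) : Prop where
  symm : ∀ lam ∈ Λ, (P lam)ᵀ = P lam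
  idem : ∀ lam ∈ Λ, P lam * P lam = P lam
  nonzero : ∀ lam ∈ Λ, P lam ≠ 0
  orth : ∀ lam ∈ Λ, ∀ mu ∈ Λ, lam ≠ mu → P lam * P mu = 0
  sum_one : ∑ lam ∈ Λ, P lam = 1
  sum_smul : ∑ lam ∈ Λ, lam • P lam = M

/-- The eigenspace projection invariant
`𝒫^M(u,v) = {{(lam, P_lam(u,v)) : lam eigenvalue of M}}`. -/
def projInv {n : Type*} (Λ : Finset ℝ) (P : ℝ → Matrix n n ℝ) (u v : n) :
    Multiset (ℝ × ℝ) :=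
  Λ.val.map fun lam => (lam, P lam u v)

/-! ### Subgraph Weisfeiler-Lehman variants (SWL, PSWL) and 3-WL -/

/-- Round-`l` color type for SWL. -/
def SColor : ℕ → Type
  | 0 => ℕ
  | l + 1 => SColor l × Multiset (SColor l × ℕ)

/-- Initial pair color: `1` on the diagonal, `0` off it. -/
def initPairColor {V : Type*} (u v : V) : ℕ := if u = v then 1 else 0

/-- The SWL pair-coloring. -/
def swl {V : Type*} [Fintype V] (G : SimpleGraph V) :
    (l : ℕ) → V → V → SColor l
  | 0 => fun u v => initPairColor u v
  | l + 1 => fun u v =>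
      (swl G l u v, Finset.univ.val.map fun w => (swl G l u w, atp G v w))

/-- SWL indistinguishability. -/
def SWLIndist {V W : Type*} [Fintype V] [Fintype W]
    (G : SimpleGraph V) (H : SimpleGraph W) : Prop :=
  ∀ l : ℕ,
    ((Finset.univ : Finset (V × V)).val.map fun p => swl G l p.1 p.2) =
      ((Finset.univ : Finset (W × W)).val.map fun p => swl H l p.1 p.2)

/-- Round-`l` color type for PSWL. -/
def PSColor : ℕ → Type
  | 0 => ℕ
  | l + 1 => PSColor l × PSColor l × Multiset (PSColor l × ℕ)

/-- The PSWL pair-coloring. -/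
def pswl {V : Type*} [Fintype V] (G : SimpleGraph V) :
    (l : ℕ) → V → V → PSColor l
  | 0 => fun u v => initPairColor u v
  | l + 1 => fun u v =>
      (pswl G l u v, pswl G l v v,
        Finset.univ.val.map fun w => (pswl G l u w, atp G v w))

/-- PSWL indistinguishability. -/
def PSWLIndist {V W : Type*} [Fintype V] [Fintype W]
    (G : SimpleGraph V) (H : SimpleGraph W) : Prop :=
  ∀ l : ℕ,
    ((Finset.univ : Finset (V × V)).val.map fun p => pswl G l p.1 p.2) =
      ((Finset.univ : Finset (W × W)).val.map fun p => pswl H l p.1 p.2)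

/-- Round-`l` color type for 3-WL; the initial color records which of
`u, v, w` coincide and which of the pairs are edges. -/
def W3Color : ℕ → Type
  | 0 => Bool × Bool × Bool × Bool × Bool × Bool
  | l + 1 => W3Color l × Multiset (W3Color l × W3Color l × W3Color l)

/-- The 3-WL triple-coloring. -/
def wl3 {V : Type*} [Fintype V] (G : SimpleGraph V) :
    (l : ℕ) → V → V → V → W3Color l
  | 0 => fun u v w =>
      (decide (u = v), decide (u = w), decide (v = w),
        decide (G.Adj u v), decide (G.Adj u w), decide (G.Adj v w))
  | l + 1 => fun u v w =>
      (wl3 G l u v w,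
        Finset.univ.val.map fun z =>
          (wl3 G l z v w, wl3 G l u z w, wl3 G l u v z))

/-- 3-WL indistinguishability. -/
def WL3Indist {V W : Type*} [Fintype V] [Fintype W]
    (G : SimpleGraph V) (H : SimpleGraph W) : Prop :=
  ∀ l : ℕ,
    ((Finset.univ : Finset (V × V × V)).val.map fun p => wl3 G l p.1 p.2.1 p.2.2) =
      ((Finset.univ : Finset (W × W × W)).val.map fun p => wl3 H l p.1 p.2.1 p.2.2)

/-! ### Distances -/

/-- The shortest-path distance, valued in `ℕ∞`. -/
def spd {V : Type*} (G : SimpleGraph V) (u v : V) : ℕ∞ := G.edist u v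

/-- The four Penrose conditions characterizing the Moore–Penrose
pseudoinverse `X` of `B`. -/
def IsMoorePenrose {n : Type*} [Fintype n] (B X : Matrix n n ℝ) : Prop :=
  B * X * B = B ∧ X * B * X = X ∧ (B * X)ᵀ = B * X ∧ (X * B)ᵀ = X * B

/-- Resistance distance computed from (a Moore–Penrose pseudoinverse of)
the Laplacian: `X(u,u) + X(v,v) - 2X(u,v)` for vertices in the same
connected component, and `∞` otherwise. -/
def rdOf {V : Type*} (G : SimpleGraph V) (X : Matrix V V ℝ) (u v : V) :
    WithTop ℝ :=
  if G.Reachable u v then ((X u u + X v v - 2 * X u v : ℝ) : WithTop ℝ) else ⊤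

/-- Matrix exponential, as the everywhere-convergent power series
`exp B = ∑ Bⁿ/n!`. -/
def matExp {V : Type*} [Fintype V] (B : Matrix V V ℝ) : Matrix V V ℝ :=
  ∑' n : ℕ, ((n.factorial : ℝ))⁻¹ • B ^ n

/-! ### Connectivity notions -/

/-- Number of connected components. -/
def numComponents {V : Type*} (G : SimpleGraph V) : ℕ :=
  Nat.card G.ConnectedComponent

/-- A cut vertex: deleting it (and all incident edges) strictly increases
the number of connected components. -/
def IsCutVertex {V : Type*} (G : SimpleGraph V) (v : V) : Prop :=
  numComponents G < numComponents (G.induce {w : V | w ≠ v})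

/-- A cut edge: it is an edge whose deletion strictly increases the number
of connected components. -/
def IsCutEdge {V : Type*} (G : SimpleGraph V) (e : Sym2 V) : Prop :=
  e ∈ G.edgeSet ∧ numComponents G < numComponents (G.deleteEdges {e})


/-! ### Auxiliary machinery for Statement 9 -/

/-- Map a function over the feature components of a color. -/
def mapColor {α β : Type} (φ : α → β) : (l : ℕ) → Color α l → Color β l
  | 0 => fun c => c
  | l + 1 => fun c => (mapColor φ l c.1, c.2.map fun p => (mapColor φ l p.1, φ p.2))

lemma colorFn_comp {V : Type*} [Fintype V] {α β : Type} (φ : α → β) (f : V → V → α) :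
    ∀ (l : ℕ) (u : V), colorFn (fun u v => φ (f u v)) l u = mapColor φ l (colorFn f l u) := by
  intro l
  induction l with
  | zero => intro u; rfl
  | succ l ih =>
    intro u
    simp only [colorFn, mapColor, Multiset.map_map, Function.comp, ih]
    rfl

lemma NodeIndist.comp {V W : Type*} [Fintype V] [Fintype W] {α β : Type}
    {f : V → V → α} {g : W → W → α} (h : NodeIndist f g) (φ : α → β) :
    NodeIndist (fun u v => φ (f u v)) (fun u v => φ (g u v)) := by
  intro l
  have h1 : (Finset.univ.val.map (colorFn (fun u v => φ (f u v)) l)) =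
      (Finset.univ.val.map (colorFn f l)).map (mapColor φ l) := by
    rw [Multiset.map_map]
    exact Multiset.map_congr rfl fun u _ => colorFn_comp φ f l u
  have h2 : (Finset.univ.val.map (colorFn (fun u v => φ (g u v)) l)) =
      (Finset.univ.val.map (colorFn g l)).map (mapColor φ l) := by
    rw [Multiset.map_map]
    exact Multiset.map_congr rfl fun u _ => colorFn_comp φ g l u
  rw [h1, h2, h l]

lemma IsSpectralDecomp.smul_sum_pow {n : Type*} [Fintype n]
    {M : Matrix n n ℝ} {Λ : Finset ℝ} {P : ℝ → Matrix n n ℝ}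
    (h : IsSpectralDecomp M Λ P) (c : ℝ → ℝ) (k : ℕ) :
    (∑ lam ∈ Λ, c lam • P lam) ^ k = ∑ lam ∈ Λ, (c lam) ^ k • P lam := by
  induction k with
  | zero => simpa using h.sum_one.symm
  | succ k ih =>
    rw [pow_succ, ih, Finset.sum_mul]
    refine Finset.sum_congr rfl fun lam hlam => ?_
    rw [Finset.mul_sum, Finset.sum_eq_single lam]
    · rw [smul_mul_smul_comm, h.idem lam hlam, ← pow_succ]
    · intro mu hmu hne
      rw [smul_mul_smul_comm, h.orth lam hlam mu hmu (Ne.symm hne), smul_zero]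
    · intro hlam'; exact absurd hlam hlam'

lemma one_sub_normLap {V : Type*} [Fintype V] (G : SimpleGraph V)
    (hG : ∀ v, 0 < G.degree v) :
    (1 : Matrix V V ℝ) - normLapM G = normAdjM G := by
  have hE : invSqrtDegM G * degM G * invSqrtDegM G = 1 := by
    rw [invSqrtDegM, degM, Matrix.diagonal_mul_diagonal, Matrix.diagonal_mul_diagonal,
      ← Matrix.diagonal_one]
    have key : (fun v => (Real.sqrt (G.degree v : ℝ))⁻¹ * (G.degree v : ℝ)
        * (Real.sqrt (G.degree v : ℝ))⁻¹) = fun _ : V => (1 : ℝ) := by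
      funext v
      have h0 : (0 : ℝ) < (G.degree v : ℝ) := by exact_mod_cast hG v
      have hs : Real.sqrt (G.degree v : ℝ) ≠ 0 := by positivity
      have hms : Real.sqrt (G.degree v : ℝ) * Real.sqrt (G.degree v : ℝ) = (G.degree v : ℝ) :=
        Real.mul_self_sqrt h0.le
      field_simp
      rw [Real.sq_sqrt h0.le]
    rw [key]
  rw [normLapM, lapM, Matrix.mul_sub, Matrix.sub_mul, hE, normAdjM, sub_sub_cancel]

lemma normAdjM_apply {V : Type*} [Fintype V] (G : SimpleGraph V) (u v : V) :
    normAdjM G u v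
      = (Real.sqrt (G.degree u : ℝ))⁻¹ * adjM G u v * (Real.sqrt (G.degree v : ℝ))⁻¹ := by
  rw [normAdjM, invSqrtDegM, Matrix.mul_diagonal, Matrix.diagonal_mul]

lemma adjM_nonneg {V : Type*} [Fintype V] (G : SimpleGraph V) (u v : V) :
    0 ≤ adjM G u v := by
  rw [adjM, SimpleGraph.adjMatrix_apply]
  positivity

lemma adjM_pow_nonneg {V : Type*} [Fintype V] (G : SimpleGraph V) (k : ℕ) (u v : V) :
    0 ≤ (adjM G ^ k) u v := by
  rw [adjM, SimpleGraph.adjMatrix_pow_apply_eq_card_walk]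
  positivity

lemma normAdjM_nonneg {V : Type*} [Fintype V] (G : SimpleGraph V) (u v : V) :
    0 ≤ normAdjM G u v := by
  rw [normAdjM_apply]
  have := adjM_nonneg G u v
  positivity

lemma normAdjM_eq_zero_iff {V : Type*} [Fintype V] (G : SimpleGraph V)
    (hG : ∀ v, 0 < G.degree v) (u v : V) :
    normAdjM G u v = 0 ↔ adjM G u v = 0 := by
  have h0u : (0 : ℝ) < (G.degree u : ℝ) := by exact_mod_cast hG u
  have h0v : (0 : ℝ) < (G.degree v : ℝ) := by exact_mod_cast hG v
  have hu : (Real.sqrt (G.degree u : ℝ))⁻¹ ≠ 0 := by positivity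
  have hv : (Real.sqrt (G.degree v : ℝ))⁻¹ ≠ 0 := by positivity
  rw [normAdjM_apply]
  constructor
  · intro h
    rcases mul_eq_zero.mp h with h' | h'
    · rcases mul_eq_zero.mp h' with h'' | h''
      · exact absurd h'' hu
      · exact h''
    · exact absurd h' hv
  · intro h; rw [h]; ring

lemma normAdjM_pow_zero_iff {V : Type*} [Fintype V] (G : SimpleGraph V)
    (hG : ∀ v, 0 < G.degree v) (k : ℕ) :
    ∀ u v, 0 ≤ (normAdjM G ^ k) u v ∧ ((normAdjM G ^ k) u v = 0 ↔ (adjM G ^ k) u v = 0) := by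
  induction k with
  | zero => intro u v; constructor <;> simp [Matrix.one_apply]; split <;> norm_num
  | succ k ih =>
    intro u v
    have hNk : ∀ w, 0 ≤ (normAdjM G ^ k) u w := fun w => (ih u w).1
    have hterm : ∀ w ∈ Finset.univ, 0 ≤ (normAdjM G ^ k) u w * normAdjM G w v :=
      fun w _ => mul_nonneg (hNk w) (normAdjM_nonneg G w v)
    have htermA : ∀ w ∈ Finset.univ, 0 ≤ (adjM G ^ k) u w * adjM G w v :=
      fun w _ => mul_nonneg (adjM_pow_nonneg G k u w) (adjM_nonneg G w v)
    constructor
    · rw [pow_succ, Matrix.mul_apply]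
      exact Finset.sum_nonneg hterm
    · rw [pow_succ, pow_succ, Matrix.mul_apply, Matrix.mul_apply,
        Finset.sum_eq_zero_iff_of_nonneg hterm, Finset.sum_eq_zero_iff_of_nonneg htermA]
      refine forall_congr' fun w => ?_
      refine forall_congr' fun _ => ?_
      rw [mul_eq_zero, mul_eq_zero, (ih u w).2, normAdjM_eq_zero_iff G hG]

lemma adjM_pow_ne_zero_iff {V : Type*} [Fintype V] (G : SimpleGraph V) (k : ℕ) (u v : V) :
    (adjM G ^ k) u v ≠ 0 ↔ ∃ p : G.Walk u v, p.length = k := by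
  rw [adjM, SimpleGraph.adjMatrix_pow_apply_eq_card_walk, Nat.cast_ne_zero,
    ← Nat.pos_iff_ne_zero, Fintype.card_pos_iff, Set.nonempty_coe_sort]
  constructor
  · rintro ⟨p, hp⟩; exact ⟨p, hp⟩
  · rintro ⟨p, hp⟩; exact ⟨p, hp⟩

/-- The function recovering the shortest-path distance from the eigenspace
projection invariant (for the normalized Laplacian). -/
def specF (s : Multiset (ℝ × ℝ)) : ℕ∞ :=
  sInf {m : ℕ∞ | ∃ k : ℕ, m = (k : ℕ∞) ∧ (s.map fun p => (1 - p.1) ^ k * p.2).sum ≠ 0}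

lemma projInv_sum {V : Type*} [Fintype V] (Λ : Finset ℝ) (P : ℝ → Matrix V V ℝ)
    (u v : V) (k : ℕ) :
    ((projInv Λ P u v).map fun p => (1 - p.1) ^ k * p.2).sum
      = (∑ lam ∈ Λ, (1 - lam) ^ k • P lam) u v := by
  rw [projInv, Multiset.map_map, Matrix.sum_apply, Finset.sum_eq_multiset_sum]
  simp [Function.comp]

lemma spd_eq_sInf {V : Type*} (G : SimpleGraph V) (u v : V) :
    spd G u v = sInf {m : ℕ∞ | ∃ k : ℕ, m = (k : ℕ∞) ∧ ∃ p : G.Walk u v, p.length = k} := by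
  rw [spd, SimpleGraph.edist_eq_sInf]
  congr 1
  ext m
  simp only [Set.mem_range, Set.mem_setOf_eq]
  constructor
  · rintro ⟨p, rfl⟩; exact ⟨p.length, rfl, p, rfl⟩
  · rintro ⟨k, rfl, p, hp⟩; exact ⟨p, by rw [hp]⟩

lemma spd_eq_specF {V : Type*} [Fintype V] (G : SimpleGraph V)
    (hG : ∀ v, 0 < G.degree v) (Λ : Finset ℝ) (P : ℝ → Matrix V V ℝ)
    (hP : IsSpectralDecomp (normLapM G) Λ P) (u v : V) :
    spd G u v = specF (projInv Λ P u v) := by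
  have hsum : ∑ lam ∈ Λ, (1 - lam) • P lam = normAdjM G := by
    have h1 : ∑ lam ∈ Λ, (1 - lam) • P lam
        = (∑ lam ∈ Λ, P lam) - ∑ lam ∈ Λ, lam • P lam := by
      rw [← Finset.sum_sub_distrib]
      exact Finset.sum_congr rfl fun lam _ => by rw [sub_smul, one_smul]
    rw [h1, hP.sum_one, hP.sum_smul, one_sub_normLap G hG]
  have hpow : ∀ k : ℕ, ∑ lam ∈ Λ, (1 - lam) ^ k • P lam = normAdjM G ^ k := by
    intro k
    rw [← hP.smul_sum_pow (fun lam => 1 - lam) k, hsum]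
  have hiff : ∀ k : ℕ,
      (((projInv Λ P u v).map fun p => (1 - p.1) ^ k * p.2).sum ≠ 0)
        ↔ ∃ p : G.Walk u v, p.length = k := by
    intro k
    rw [projInv_sum, hpow, ← adjM_pow_ne_zero_iff]
    exact not_congr (normAdjM_pow_zero_iff G hG k u v).2
  rw [spd_eq_sInf, specF]
  congr 1
  ext m
  simp only [Set.mem_setOf_eq]
  exact exists_congr fun k => and_congr_right fun _ => (hiff k).symm

/-- If `G` and `H` are EPWL-indistinguishable with respect
to the normalized Laplacian, then they are GD-WL-indistinguishable with
respect to the shortest-path distance. -/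
theorem epwl_bounds_gdwl_spd {V W : Type*} [Fintype V] [Fintype W]
    (G : SimpleGraph V) (H : SimpleGraph W)
    (hG : ∀ v, 0 < G.degree v) (hH : ∀ w, 0 < H.degree w)
    (ΛG : Finset ℝ) (PG : ℝ → Matrix V V ℝ)
    (hPG : IsSpectralDecomp (normLapM G) ΛG PG)
    (ΛH : Finset ℝ) (PH : ℝ → Matrix W W ℝ)
    (hPH : IsSpectralDecomp (normLapM H) ΛH PH)
    (hEP : NodeIndist (projInv ΛG PG) (projInv ΛH PH)) :
    NodeIndist (spd G) (spd H) := by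
  have h1 : spd G = fun u v => specF (projInv ΛG PG u v) :=
    funext fun u => funext fun v => spd_eq_specF G hG ΛG PG hPG u v
  have h2 : spd H = fun u v => specF (projInv ΛH PH u v) :=
    funext fun u => funext fun v => spd_eq_specF H hH ΛH PH hPH u v
  rw [h1, h2]
  exact hEP.comp specF

end EPWL
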